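/- Let φ : {-1,1}^n → ℝ^p be any feature map, and let F be a family of N distinct nonempty subsets I ⊆ [n]. Under the uniform distribution on {-1,1}^n with labels y = χ_I(x) and square loss ℓ(ŷ,y) = (ŷ−y)²/2, there exists I ∈ F such that every linear predictor h(x) = ⟨w, φ(x)⟩ (any w ∈ ℝ^p) satisfies L_{D_I}(h) ≥ 1/2 − p/(2N). -/

import Mathlib

open Finset

noncomputable def sgn (b : Bool) : ℝ := if b then 1 else -1

noncomputable def chi {n : ℕ} (I : Finset (Fin n)) (x : Fin n → Bool) : ℝ :=
  ∏ i ∈ I, sgn (x i)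

noncomputable def unif (n : ℕ) (_x : Fin n → Bool) : ℝ := 1 / 2 ^ n

lemma chi_eq_prod_univ {n : ℕ} (I : Finset (Fin n)) (x : Fin n → Bool) :
    chi I x = ∏ i : Fin n, (if i ∈ I then sgn (x i) else 1) := by
  rw [chi, Finset.prod_ite_mem, Finset.univ_inter]

lemma sum_chi_mul {n : ℕ} (I J : Finset (Fin n)) :
    ∑ x : Fin n → Bool, chi I x * chi J x = if I = J then (2:ℝ)^n else 0 := by
  classical
  have key : ∀ x : Fin n → Bool, chi I x * chi J x =
      ∏ i : Fin n, ((if i ∈ I then sgn (x i) else 1) * (if i ∈ J then sgn (x i) else 1)) := by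
    intro x
    rw [chi_eq_prod_univ, chi_eq_prod_univ, Finset.prod_mul_distrib]
  simp only [key]
  have := (Finset.prod_univ_sum (fun _ : Fin n => (Finset.univ : Finset Bool))
      (fun i b => ((if i ∈ I then sgn b else 1) * (if i ∈ J then sgn b else 1)))).symm
  rw [Fintype.piFinset_univ] at this
  rw [this]
  have hcoord : ∀ i : Fin n,
      (∑ b : Bool, (if i ∈ I then sgn b else 1) * (if i ∈ J then sgn b else 1)) =
        if (i ∈ I ↔ i ∈ J) then (2:ℝ) else 0 := by
    intro i
    by_cases hI : i ∈ I <;> by_cases hJ : i ∈ J <;>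
      simp [hI, hJ, sgn, Fintype.sum_bool] <;> norm_num
  simp only [hcoord]
  by_cases h : I = J
  · subst h; simp
  · simp only [h, if_false]
    obtain ⟨i, hi⟩ : ∃ i, ¬(i ∈ I ↔ i ∈ J) := by
      by_contra hc
      push_neg at hc
      exact h (Finset.ext fun i => hc i)
    exact Finset.prod_eq_zero (Finset.mem_univ i) (by simp [hi])


noncomputable def eI (n : ℕ) (I : Finset (Fin n)) : EuclideanSpace ℝ (Fin n → Bool) :=
  WithLp.toLp 2 fun x => (Real.sqrt (2^n))⁻¹ * chi I x

lemma orthonormal_eI (n : ℕ) : Orthonormal ℝ (eI n) := by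
  rw [orthonormal_iff_ite]
  intro I J
  have hpos : (0:ℝ) < 2^n := by positivity
  have hsq : (Real.sqrt (2^n))⁻¹ * (Real.sqrt (2^n))⁻¹ = (2^n)⁻¹ := by
    rw [← mul_inv, Real.mul_self_sqrt hpos.le]
  have h1 : (inner ℝ (eI n I) (eI n J) : ℝ)
      = (2^n)⁻¹ * ∑ x : Fin n → Bool, chi I x * chi J x := by
    rw [PiLp.inner_apply]
    simp only [RCLike.inner_apply, starRingEnd_apply, star_trivial, eI, PiLp.toLp_apply]
    rw [Finset.mul_sum]
    congr 1; funext x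
    rw [show (Real.sqrt (2^n))⁻¹ * chi J x * ((Real.sqrt (2^n))⁻¹ * chi I x)
      = ((Real.sqrt (2^n))⁻¹ * (Real.sqrt (2^n))⁻¹) * (chi I x * chi J x) by ring, hsq]
  rw [h1, sum_chi_mul]
  by_cases h : I = J <;> simp [h, hpos.ne']

/-- Dimension-based kernel lower bound for parities: for any `p`-dimensional feature map
and any family of `N` distinct nonempty parities, some parity resists all linear
predictors over the features, whose square loss is at least `1/2 - p/(2N)`. -/
theorem stmt6 {n p N : ℕ} (hN : 0 < N)
    (φ : (Fin n → Bool) → EuclideanSpace ℝ (Fin p))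
    (F : Finset (Finset (Fin n))) (hcard : F.card = N)
    (hne : ∀ I ∈ F, I.Nonempty) :
    ∃ I ∈ F, ∀ w : EuclideanSpace ℝ (Fin p),
      (1:ℝ)/2 - (p : ℝ)/(2 * N) ≤
        ∑ x : Fin n → Bool, unif n x * ((inner ℝ w (φ x) : ℝ) - chi I x) ^ 2 / 2 := by
  classical
  set c : ℝ := (Real.sqrt (2^n))⁻¹ with hc
  have hpos : (0:ℝ) < 2^n := by positivity
  have hc2 : c * c = (2^n)⁻¹ := by
    rw [hc, ← mul_inv, Real.mul_self_sqrt hpos.le]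
  -- feature functions and their span
  set g : Fin p → EuclideanSpace ℝ (Fin n → Bool) := fun j => WithLp.toLp 2 fun x => φ x j with hg
  set K : Submodule ℝ (EuclideanSpace ℝ (Fin n → Bool)) := Submodule.span ℝ (Set.range g) with hK
  have hdim : Module.finrank ℝ K ≤ p := by
    exact (finrank_range_le_card (R := ℝ) g).trans_eq (Fintype.card_fin p)
  set P := K.orthogonalProjectionOnto with hP
  set b := stdOrthonormalBasis ℝ K with hb
  -- norm of projection via coordinates
  have hPnorm : ∀ v : EuclideanSpace ℝ (Fin n → Bool),
      ‖(P v : EuclideanSpace ℝ (Fin n → Bool))‖^2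
        = ∑ j, (inner ℝ ((b j : K) : EuclideanSpace ℝ (Fin n → Bool)) v : ℝ)^2 := by
    intro v
    have hnorm : ‖(P v : EuclideanSpace ℝ (Fin n → Bool))‖ = ‖P v‖ := Submodule.norm_coe _
    rw [hnorm, ← real_inner_self_eq_norm_sq, ← b.sum_inner_mul_inner (P v) (P v)]
    refine Finset.sum_congr rfl fun j _ => ?_
    rw [real_inner_comm (P v) (b j), hP, Submodule.inner_orthogonalProjectionOnto_eq_of_mem_right,
      real_inner_comm v ((b j : K) : EuclideanSpace ℝ (Fin n → Bool)), sq]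
  -- Bessel: total projected mass at most p
  have hsum : ∑ I ∈ F, ‖(P (eI n I) : EuclideanSpace ℝ (Fin n → Bool))‖^2 ≤ (p : ℝ) := by
    calc ∑ I ∈ F, ‖(P (eI n I) : EuclideanSpace ℝ (Fin n → Bool))‖^2
        = ∑ I ∈ F, ∑ j, (inner ℝ ((b j : K) : EuclideanSpace ℝ (Fin n → Bool)) (eI n I) : ℝ)^2 :=
          Finset.sum_congr rfl fun I _ => hPnorm (eI n I)
      _ = ∑ j, ∑ I ∈ F, (inner ℝ ((b j : K) : EuclideanSpace ℝ (Fin n → Bool)) (eI n I) : ℝ)^2 :=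
          Finset.sum_comm
      _ ≤ ∑ j : Fin (Module.finrank ℝ K), (1:ℝ) := by
          refine Finset.sum_le_sum fun j _ => ?_
          have hb1 : ‖((b j : K) : EuclideanSpace ℝ (Fin n → Bool))‖ = 1 := by
            rw [Submodule.norm_coe]; exact b.orthonormal.1 j
          have := (orthonormal_eI n).sum_inner_products_le (s := F)
            (((b j : K) : EuclideanSpace ℝ (Fin n → Bool)))
          rw [hb1, one_pow] at this
          refine le_trans (le_of_eq ?_) this
          refine Finset.sum_congr rfl fun I _ => ?_
          rw [real_inner_comm, Real.norm_eq_abs, sq_abs]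
      _ = (Module.finrank ℝ K : ℝ) := by simp
      _ ≤ (p : ℝ) := by exact_mod_cast hdim
  -- pick a bad parity
  obtain ⟨I, hIF, hI⟩ : ∃ I ∈ F,
      ‖(P (eI n I) : EuclideanSpace ℝ (Fin n → Bool))‖^2 ≤ (p : ℝ) / N := by
    have hFne : F.Nonempty := Finset.card_pos.mp (hcard ▸ hN)
    refine Finset.exists_le_of_sum_le hFne ?_
    rw [Finset.sum_const, hcard, nsmul_eq_mul]
    rw [mul_div_cancel₀ _ (by exact_mod_cast hN.ne')]
    exact hsum
  refine ⟨I, hIF, fun w => ?_⟩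
  -- the rescaled predictor lies in K
  set u : EuclideanSpace ℝ (Fin n → Bool) := WithLp.toLp 2 fun x => c * (inner ℝ w (φ x) : ℝ) with hu
  have huK : u ∈ K := by
    have hrepr : u = ∑ j, (c * w j) • g j := by
      ext x
      have happ : (∑ j, (c * w j) • g j) x = ∑ j, (c * w j) • g j x := by
        induction (Finset.univ : Finset (Fin p)) using Finset.induction with
        | empty => rfl
        | insert _ _ hnotmem ih =>
          rw [Finset.sum_insert hnotmem, Finset.sum_insert hnotmem, ← ih]
          rfl
      rw [hu]
      show c * (inner ℝ w (φ x) : ℝ) = _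
      rw [happ, PiLp.inner_apply]
      simp only [RCLike.inner_apply, starRingEnd_apply, star_trivial, smul_eq_mul, hg, PiLp.toLp_apply]
      rw [Finset.mul_sum]
      exact Finset.sum_congr rfl fun j _ => by ring
    rw [hrepr]
    exact Submodule.sum_smul_mem K _ fun j _ => Submodule.subset_span ⟨j, rfl⟩
  -- loss equals half squared distance
  have hloss : ∑ x : Fin n → Bool, unif n x * ((inner ℝ w (φ x) : ℝ) - chi I x) ^ 2 / 2
      = ‖u - eI n I‖^2 / 2 := by
    have hkey : ‖u - eI n I‖^2
        = ∑ x : Fin n → Bool, unif n x * ((inner ℝ w (φ x) : ℝ) - chi I x)^2 := by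
      rw [← real_inner_self_eq_norm_sq, PiLp.inner_apply]
      refine Finset.sum_congr rfl fun x _ => ?_
      have hx : (u - eI n I) x = c * ((inner ℝ w (φ x) : ℝ) - chi I x) := by
        simp only [PiLp.sub_apply, hu, eI, PiLp.toLp_apply]
        ring
      simp only [RCLike.inner_apply, starRingEnd_apply, star_trivial, hx]
      rw [show c * ((inner ℝ w (φ x) : ℝ) - chi I x) * (c * ((inner ℝ w (φ x) : ℝ) - chi I x))
          = (c * c) * ((inner ℝ w (φ x) : ℝ) - chi I x)^2 by ring, hc2, unif]
      rw [one_div]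
    rw [hkey, Finset.sum_div]
  -- Pythagoras lower bound
  have hpyth : (1:ℝ) - (p:ℝ)/N ≤ ‖u - eI n I‖^2 := by
    set e := eI n I with he
    set Pe : EuclideanSpace ℝ (Fin n → Bool) := (P e : EuclideanSpace ℝ (Fin n → Bool)) with hPe
    have horth : ∀ v ∈ K, (inner ℝ (e - Pe) v : ℝ) = 0 := fun v hv =>
      K.starProjection_inner_eq_zero e v hv
    -- ‖e‖² = ‖Pe‖² + ‖e - Pe‖²
    have he1 : ‖e‖ = 1 := (orthonormal_eI n).1 I
    have hsplit : ‖e‖^2 = ‖Pe‖^2 + ‖e - Pe‖^2 := by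
      have hdecomp : e = Pe + (e - Pe) := by abel
      have hz : (inner ℝ Pe (e - Pe) : ℝ) = 0 := by
        rw [real_inner_comm]
        exact horth Pe (Submodule.coe_mem _)
      calc ‖e‖^2 = ‖Pe + (e - Pe)‖^2 := by rw [← hdecomp]
        _ = ‖Pe‖^2 + 2 * (inner ℝ Pe (e - Pe) : ℝ) + ‖e - Pe‖^2 := norm_add_sq_real _ _
        _ = ‖Pe‖^2 + ‖e - Pe‖^2 := by rw [hz]; ring
    have hlow : ‖e - Pe‖^2 ≤ ‖u - e‖^2 := by
      have hdecomp : u - e = (u - Pe) + (Pe - e) := by abel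
      have hz : (inner ℝ (u - Pe) (Pe - e) : ℝ) = 0 := by
        have h1 : u - Pe ∈ K := Submodule.sub_mem K huK (Submodule.coe_mem _)
        rw [real_inner_comm, show Pe - e = -(e - Pe) by abel, inner_neg_left, horth _ h1]
        ring
      calc ‖e - Pe‖^2 = ‖Pe - e‖^2 := by rw [norm_sub_rev]
        _ ≤ ‖u - Pe‖^2 + ‖Pe - e‖^2 := le_add_of_nonneg_left (by positivity)
        _ = ‖u - Pe‖^2 + 2 * (inner ℝ (u - Pe) (Pe - e) : ℝ) + ‖Pe - e‖^2 := by rw [hz]; ring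
        _ = ‖(u - Pe) + (Pe - e)‖^2 := (norm_add_sq_real _ _).symm
        _ = ‖u - e‖^2 := by rw [← hdecomp]
    have : (1:ℝ) - (p:ℝ)/N ≤ ‖e - Pe‖^2 := by
      have := hsplit
      rw [he1, one_pow] at this
      have hPe2 : ‖Pe‖^2 ≤ (p:ℝ)/N := hI
      linarith
    linarith
  rw [hloss]
  have : (1:ℝ)/2 - (p : ℝ)/(2 * N) = ((1:ℝ) - (p:ℝ)/N)/2 := by ring
  rw [this]
  linarith
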